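/- Let I be a finite index set and let (k_i)_{i∈I} and (n_i)_{i∈I} be families of positive integers. Consider vectors ψ = (ψ_i)_{i∈I} where each ψ_i ∈ ℂ^{k_i} ⊗ ℂ^{n_i}, and operators of the form ⊕_{i∈I} (I_{k_i} ⊗ A_i) where each A_i is an n_i×n_i complex matrix. Then there exists a vector ψ such that for every family (A_i)_{i∈I}, if (I_{k_i} ⊗ A_i)ψ_i = 0 for all i ∈ I then A_i = 0 for all i ∈ I, if and only if k_i ≥ n_i for all i ∈ I. (That is, the C*-algebra ⊕_i (I_{k_i} ⊗ M_{n_i}) has a separating vector if and only if k_i ≥ n_i for all i.) -/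

import Mathlib

open Matrix Kronecker

lemma kron_entry {k n : ℕ} (A : Matrix (Fin n) (Fin n) ℂ) (ψ : Fin k × Fin n → ℂ) (a : Fin k) (b : Fin n) :
    (((1 : Matrix (Fin k) (Fin k) ℂ) ⊗ₖ A).mulVec ψ) (a, b) = ∑ d, A b d * ψ (a, d) := by
  simp [Matrix.mulVec, dotProduct, Fintype.sum_prod_type, Matrix.one_apply, ite_mul, mul_assoc]

theorem stmt7 (I : Type*) [Fintype I] (k n : I → ℕ)
    (hk : ∀ i, 0 < k i) (hn : ∀ i, 0 < n i) :
    (∃ ψ : ∀ i : I, (Fin (k i) × Fin (n i)) → ℂ,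
      ∀ A : ∀ i : I, Matrix (Fin (n i)) (Fin (n i)) ℂ,
        (∀ i, (((1 : Matrix (Fin (k i)) (Fin (k i)) ℂ) ⊗ₖ A i).mulVec (ψ i)) = 0) →
        ∀ i, A i = 0)
    ↔ ∀ i, n i ≤ k i := by
  classical
  constructor
  · rintro ⟨ψ, hψ⟩ i₀
    by_contra hlt
    push_neg at hlt
    set M : Matrix (Fin (k i₀)) (Fin (n i₀)) ℂ := Matrix.of fun a c => ψ i₀ (a, c) with hM
    have hni : ¬ Function.Injective M.mulVecLin := by
      intro hinj
      have h1 := LinearMap.finrank_le_finrank_of_injective hinj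
      simp [Module.finrank_fin_fun] at h1
      omega
    rw [← LinearMap.ker_eq_bot] at hni
    obtain ⟨v, hv, hv0⟩ := Submodule.ne_bot_iff _ |>.mp hni
    have hMv : M.mulVec v = 0 := hv
    set B : Matrix (Fin (n i₀)) (Fin (n i₀)) ℂ := Matrix.of fun _ c => v c with hB
    set A : ∀ i : I, Matrix (Fin (n i)) (Fin (n i)) ℂ :=
      Function.update (fun _ => 0) i₀ B with hA
    have hAz : ∀ i, (((1 : Matrix (Fin (k i)) (Fin (k i)) ℂ) ⊗ₖ A i).mulVec (ψ i)) = 0 := by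
      intro i
      by_cases hi : i = i₀
      · subst hi
        funext p
        obtain ⟨a, b⟩ := p
        rw [kron_entry]
        have : A i = B := Function.update_self _ _ _
        rw [this]
        have := congrFun hMv a
        simpa [hB, hM, Matrix.mulVec, dotProduct, mul_comm] using this
      · have : A i = 0 := Function.update_of_ne hi _ _
        simp [this]
    have := hψ A hAz i₀
    rw [hA, Function.update_self] at this
    apply hv0
    funext c
    have := congrFun (congrFun this ⟨0, hn i₀⟩) c
    simpa [hB] using this
  · intro h
    refine ⟨fun i p => if (p.1 : ℕ) = (p.2 : ℕ) then 1 else 0, fun A hA i => ?_⟩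
    ext b c
    have := congrFun (hA i) (⟨(c : ℕ), lt_of_lt_of_le c.2 (h i)⟩, b)
    rw [kron_entry] at this
    simp only [Pi.zero_apply] at this
    rw [show (∑ d, A i b d * (if ((⟨(c : ℕ), lt_of_lt_of_le c.2 (h i)⟩ : Fin (k i)) : ℕ) = (d : ℕ) then (1:ℂ) else 0)) = A i b c from ?_] at this
    · exact this
    · rw [Finset.sum_eq_single c] <;> simp (config := {contextual := true}) [Fin.val_eq_val, eq_comm]
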